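/- Poisson commutativity of glued Gaudin families: on the product Lie–Poisson manifold gl(r)^{*N} with brackets {(X_i)_{ab}, (X_j)_{cd}} = δ_{ij}(δ_{cb}(X_i)_{ad} − δ_{ad}(X_i)_{cb}), any function h_2 that depends on X_1,…,X_k only through their sum and is built from spectral invariants of L_2(z)=Σ_{i=1}^k X_i/(z−z_i) + (Σ_{i=k+1}^N X_i)/(z−w), Poisson-commutes with any function h_1 invariant under the diagonal adjoint action of GL(r) and depending only on X_{k+1},…,X_N. In particular {Tr L_1(u)^m, Tr L_2(v)^n} = 0 for L_1(u)=Σ_{i=k+1}^N X_i/(u−u_i). -/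

import Mathlib

open Matrix

noncomputable section

/-- The phase space `gl(r)^N`: `N`-tuples of `r × r` complex matrices, realized as nested
functions (so that the `Pi` normed-space structure is available for differentiation). -/
abbrev GaudinPhase (N r : ℕ) := Fin N → Fin r → Fin r → ℂ

/-- The coordinate direction on `gl(r)^N` corresponding to the matrix entry `(a,b)` of the
`i`-th matrix. -/
def gaudinBasis (N r : ℕ) (i : Fin N) (a b : Fin r) : GaudinPhase N r :=
  Pi.single i (Pi.single a (Pi.single b 1))

/-- The partial derivative `∂F/∂(X_i)_{ab}` of a function on `gl(r)^N`. -/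
def gaudinPDeriv {N r : ℕ} (F : GaudinPhase N r → ℂ) (i : Fin N) (a b : Fin r)
    (X : GaudinPhase N r) : ℂ :=
  fderiv ℂ F X (gaudinBasis N r i a b)

/-- The product Lie–Poisson bracket on `gl(r)^N`, determined by
`{(X_i)_{ab}, (X_j)_{cd}} = δ_{ij} (δ_{cb} (X_i)_{ad} - δ_{ad} (X_i)_{cb})`. -/
def gaudinPoisson {N r : ℕ} (F G : GaudinPhase N r → ℂ) (X : GaudinPhase N r) : ℂ :=
  ∑ i : Fin N, ∑ a : Fin r, ∑ b : Fin r, ∑ c : Fin r, ∑ d : Fin r,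
    ((if c = b then X i a d else 0) - (if a = d then X i c b else 0)) *
      gaudinPDeriv F i a b X * gaudinPDeriv G i c d X

/-- The first limiting Lax matrix `L₁(v) = ∑_{i>k} X i / (v - u i)` (sites `k+1, …, N`). -/
def glueLax₁ {N r : ℕ} (k : ℕ) (u : Fin N → ℂ) (v : ℂ) (X : GaudinPhase N r) :
    Matrix (Fin r) (Fin r) ℂ :=
  ∑ i ∈ Finset.univ.filter (fun i : Fin N => k ≤ (i : ℕ)), (v - u i)⁻¹ • Matrix.of (X i)

/-- The second limiting Lax matrix
`L₂(v) = ∑_{i≤k} X i / (v - z i) + (∑_{i>k} X i)/(v - w)`. -/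
def glueLax₂ {N r : ℕ} (k : ℕ) (z : Fin N → ℂ) (w : ℂ) (v : ℂ) (X : GaudinPhase N r) :
    Matrix (Fin r) (Fin r) ℂ :=
  (∑ i ∈ Finset.univ.filter (fun i : Fin N => (i : ℕ) < k), (v - z i)⁻¹ • Matrix.of (X i)) +
    (v - w)⁻¹ • ∑ i ∈ Finset.univ.filter (fun i : Fin N => k ≤ (i : ℕ)), Matrix.of (X i)


section GluedGaudinAux

lemma fderiv_eq_of_eventually {N r : ℕ} (h : GaudinPhase N r → ℂ)
    (hd : Differentiable ℂ h) (X P Q : GaudinPhase N r)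
    (hpq : ∀ᶠ t : ℂ in nhds 0, h (X + t • P) = h (X + t • Q)) :
    fderiv ℂ h X P = fderiv ℂ h X Q := by
  have lineP : HasDerivAt (fun t : ℂ => X + t • P) P 0 := by
    simpa using ((hasDerivAt_id (0:ℂ)).smul_const P).const_add X
  have lineQ : HasDerivAt (fun t : ℂ => X + t • Q) Q 0 := by
    simpa using ((hasDerivAt_id (0:ℂ)).smul_const Q).const_add X
  have hP : HasDerivAt (fun t : ℂ => h (X + t • P)) (fderiv ℂ h X P) 0 := by
    have := (hd (X + (0:ℂ) • P)).hasFDerivAt.comp_hasDerivAt 0 lineP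
    simpa [Function.comp_def] using this
  have hQ : HasDerivAt (fun t : ℂ => h (X + t • Q)) (fderiv ℂ h X Q) 0 := by
    have := (hd (X + (0:ℂ) • Q)).hasFDerivAt.comp_hasDerivAt 0 lineQ
    simpa [Function.comp_def] using this
  have hP' : HasDerivAt (fun t : ℂ => h (X + t • Q)) (fderiv ℂ h X P) 0 :=
    hP.congr_of_eventuallyEq (hpq.mono fun t ht => ht.symm)
  exact hP'.unique hQ

lemma basis_expand {N r : ℕ} (V : GaudinPhase N r) :
    V = ∑ i : Fin N, ∑ a : Fin r, ∑ b : Fin r, V i a b • gaudinBasis N r i a b := by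
  funext j c d
  simp [gaudinBasis, Finset.sum_apply, Pi.single_apply, Pi.smul_apply, smul_eq_mul,
    apply_ite (fun (g : Fin r → Fin r → ℂ) => g c), apply_ite (fun (g : Fin r → ℂ) => g d),
    Finset.sum_ite_eq, mul_ite, mul_one, mul_zero]

lemma fderiv_expand {N r : ℕ} (h : GaudinPhase N r → ℂ) (X V : GaudinPhase N r) :
    fderiv ℂ h X V = ∑ i : Fin N, ∑ a : Fin r, ∑ b : Fin r,
      V i a b * gaudinPDeriv h i a b X := by
  conv_lhs => rw [basis_expand V]
  rw [map_sum]
  refine Finset.sum_congr rfl fun i _ => ?_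
  rw [map_sum]
  refine Finset.sum_congr rfl fun a _ => ?_
  rw [map_sum]
  refine Finset.sum_congr rfl fun b _ => ?_
  rw [_root_.map_smul, smul_eq_mul]; rfl

lemma pderiv_lt_eq_zero {N r k : ℕ} (h : GaudinPhase N r → ℂ) (hd : Differentiable ℂ h)
    (hdep : ∀ X Y : GaudinPhase N r, (∀ i : Fin N, k ≤ (i : ℕ) → X i = Y i) → h X = h Y)
    (i : Fin N) (hi : (i : ℕ) < k) (a b : Fin r) (X : GaudinPhase N r) :
    gaudinPDeriv h i a b X = 0 := by
  have := fderiv_eq_of_eventually h hd X (gaudinBasis N r i a b) 0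
    (Filter.Eventually.of_forall fun t => hdep _ _ (fun j hj => by
      have hne : j ≠ i := by rintro rfl; omega
      funext c d
      simp [gaudinBasis, Pi.single_eq_of_ne hne]))
  simpa [gaudinPDeriv] using this

lemma pderiv_ge_eq {N r k : ℕ} (h : GaudinPhase N r → ℂ) (hd : Differentiable ℂ h)
    (hsum : ∀ X Y : GaudinPhase N r, (∀ i : Fin N, (i : ℕ) < k → X i = Y i) →
      (∑ i ∈ Finset.univ.filter (fun i : Fin N => k ≤ (i : ℕ)), Matrix.of (X i)) =
        (∑ i ∈ Finset.univ.filter (fun i : Fin N => k ≤ (i : ℕ)), Matrix.of (Y i)) →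
      h X = h Y)
    (i j : Fin N) (hi : k ≤ (i : ℕ)) (hj : k ≤ (j : ℕ)) (c d : Fin r) (X : GaudinPhase N r) :
    gaudinPDeriv h i c d X = gaudinPDeriv h j c d X := by
  refine fderiv_eq_of_eventually h hd X _ _ (Filter.Eventually.of_forall fun t => ?_)
  refine hsum _ _ (fun l hl => ?_) ?_
  · have hne1 : l ≠ i := by rintro rfl; omega
    have hne2 : l ≠ j := by rintro rfl; omega
    funext a' b'
    simp [gaudinBasis, Pi.single_eq_of_ne hne1, Pi.single_eq_of_ne hne2]
  · ext a' b'
    simp only [Matrix.sum_apply, Matrix.of_apply, Pi.add_apply, Pi.smul_apply, smul_eq_mul]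
    rw [Finset.sum_add_distrib, Finset.sum_add_distrib]
    congr 1
    simp [gaudinBasis, Pi.single_apply, apply_ite (fun (g : Fin r → Fin r → ℂ) => g a'),
      apply_ite (fun (g : Fin r → ℂ) => g b'), mul_ite, mul_zero,
      Finset.sum_ite_eq', hi, hj]

lemma conj_deriv_eq {N r : ℕ} (h₁ : GaudinPhase N r → ℂ) (hd₁ : Differentiable ℂ h₁)
    (hinv₁ : ∀ g : GL (Fin r) ℂ, ∀ X : GaudinPhase N r,
      h₁ (fun i a b =>
        ((g : Matrix (Fin r) (Fin r) ℂ) * Matrix.of (X i) *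
          ((g⁻¹ : GL (Fin r) ℂ) : Matrix (Fin r) (Fin r) ℂ)) a b) = h₁ X)
    (X : GaudinPhase N r) (Y : Matrix (Fin r) (Fin r) ℂ) :
    fderiv ℂ h₁ X (fun i a b => (Y * Matrix.of (X i)) a b) =
      fderiv ℂ h₁ X (fun i a b => (Matrix.of (X i) * Y) a b) := by
  refine fderiv_eq_of_eventually h₁ hd₁ X _ _ ?_
  have hc : Continuous fun t : ℂ => ((1 : Matrix (Fin r) (Fin r) ℂ) + t • Y).det :=
    Continuous.matrix_det (continuous_const.add (continuous_id.smul continuous_const))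
  have h0 : ((1 : Matrix (Fin r) (Fin r) ℂ) + (0:ℂ) • Y).det ≠ 0 := by simp
  have hdet := (hc.continuousAt (x := 0)).eventually_ne h0
  filter_upwards [hdet] with t ht
  have hunit : IsUnit ((1 : Matrix (Fin r) (Fin r) ℂ) + t • Y) :=
    (isUnit_iff_isUnit_det _).mpr (Ne.isUnit ht)
  set g : GL (Fin r) ℂ := hunit.unit with hg
  have hgval : (g : Matrix (Fin r) (Fin r) ℂ) = 1 + t • Y := rfl
  have key := hinv₁ g (fun i a b => (Matrix.of (X i) * (g : Matrix (Fin r) (Fin r) ℂ)) a b)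
  have lhs_eq : (fun i a b =>
        ((g : Matrix (Fin r) (Fin r) ℂ) *
          Matrix.of ((fun i a b => (Matrix.of (X i) * (g : Matrix (Fin r) (Fin r) ℂ)) a b) i) *
          ((g⁻¹ : GL (Fin r) ℂ) : Matrix (Fin r) (Fin r) ℂ)) a b)
      = (X + t • fun i a b => (Y * Matrix.of (X i)) a b) := by
    funext i a b
    have hmat : (g : Matrix (Fin r) (Fin r) ℂ) * (Matrix.of (X i) * (g : Matrix (Fin r) (Fin r) ℂ)) *
        ((g⁻¹ : GL (Fin r) ℂ) : Matrix (Fin r) (Fin r) ℂ)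
        = Matrix.of (X i) + t • (Y * Matrix.of (X i)) := by
      rw [mul_assoc, mul_assoc]
      rw [show ((g : Matrix (Fin r) (Fin r) ℂ) * ((g⁻¹ : GL (Fin r) ℂ) : Matrix (Fin r) (Fin r) ℂ)) = 1
        from g.mul_inv]
      rw [mul_one, hgval, add_mul, one_mul, smul_mul_assoc]
    calc ((g : Matrix (Fin r) (Fin r) ℂ) *
          Matrix.of ((fun i a b => (Matrix.of (X i) * (g : Matrix (Fin r) (Fin r) ℂ)) a b) i) *
          ((g⁻¹ : GL (Fin r) ℂ) : Matrix (Fin r) (Fin r) ℂ)) a b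
        = (Matrix.of (X i) + t • (Y * Matrix.of (X i))) a b := by rw [← hmat]; rfl
      _ = (X + t • fun i a b => (Y * Matrix.of (X i)) a b) i a b := by
          simp [Matrix.add_apply, Matrix.smul_apply, smul_eq_mul]
  have rhs_eq : (fun i a b => (Matrix.of (X i) * (g : Matrix (Fin r) (Fin r) ℂ)) a b)
      = (X + t • fun i a b => (Matrix.of (X i) * Y) a b) := by
    funext i a b
    rw [hgval]
    simp [Matrix.mul_add, Matrix.add_apply, Matrix.smul_apply, mul_smul_comm, smul_eq_mul]
  rw [lhs_eq, rhs_eq] at key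
  exact key

lemma site_identity {r : ℕ} (M F G : Fin r → Fin r → ℂ) :
    (∑ a : Fin r, ∑ b : Fin r, ∑ c : Fin r, ∑ d : Fin r,
      ((if c = b then M a d else 0) - (if a = d then M c b else 0)) * F a b * G c d)
    = ∑ a : Fin r, ∑ b : Fin r,
        ((∑ e : Fin r, M a e * G b e) - (∑ e : Fin r, G e a * M e b)) * F a b := by
  refine Finset.sum_congr rfl fun a _ => Finset.sum_congr rfl fun b _ => ?_
  simp only [sub_mul, Finset.sum_sub_distrib]
  congr 1
  · rw [Finset.sum_comm]
    simp only [ite_mul, zero_mul, Finset.sum_ite_eq', Finset.mem_univ, if_true]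
    rw [Finset.sum_mul]
    refine Finset.sum_congr rfl fun d _ => by ring
  · rw [Finset.sum_mul]
    refine Finset.sum_congr rfl fun c _ => ?_
    simp only [ite_mul, zero_mul]
    rw [Finset.sum_ite_eq]
    simp only [Finset.mem_univ, if_true]
    ring

lemma key_poisson {N r : ℕ} (k : ℕ) (hkN : k < N) (h₁ h₂ : GaudinPhase N r → ℂ)
    (hd₁ : Differentiable ℂ h₁) (hd₂ : Differentiable ℂ h₂)
    (hdep₁ : ∀ X Y : GaudinPhase N r, (∀ i : Fin N, k ≤ (i : ℕ) → X i = Y i) → h₁ X = h₁ Y)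
    (hinv₁ : ∀ g : GL (Fin r) ℂ, ∀ X : GaudinPhase N r,
      h₁ (fun i a b =>
        ((g : Matrix (Fin r) (Fin r) ℂ) * Matrix.of (X i) *
          ((g⁻¹ : GL (Fin r) ℂ) : Matrix (Fin r) (Fin r) ℂ)) a b) = h₁ X)
    (hsum : ∀ X Y : GaudinPhase N r, (∀ i : Fin N, (i : ℕ) < k → X i = Y i) →
      (∑ i ∈ Finset.univ.filter (fun i : Fin N => k ≤ (i : ℕ)), Matrix.of (X i)) =
        (∑ i ∈ Finset.univ.filter (fun i : Fin N => k ≤ (i : ℕ)), Matrix.of (Y i)) →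
      h₂ X = h₂ Y)
    (X : GaudinPhase N r) : gaudinPoisson h₁ h₂ X = 0 := by
  set i₀ : Fin N := ⟨k, hkN⟩ with hi₀def
  have hi₀ : k ≤ (i₀ : ℕ) := le_refl k
  set G : Fin r → Fin r → ℂ := fun c d => gaudinPDeriv h₂ i₀ c d X with hGdef
  set Y : Matrix (Fin r) (Fin r) ℂ := Matrix.of (fun p q => G q p) with hYdef
  set P : GaudinPhase N r := fun i a b => (Y * Matrix.of (X i)) a b with hPdef
  set Q : GaudinPhase N r := fun i a b => (Matrix.of (X i) * Y) a b with hQdef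
  have main : gaudinPoisson h₁ h₂ X =
      ∑ i : Fin N, ∑ a : Fin r, ∑ b : Fin r,
        (Q i a b - P i a b) * gaudinPDeriv h₁ i a b X := by
    unfold gaudinPoisson
    refine Finset.sum_congr rfl fun i _ => ?_
    by_cases hik : k ≤ (i : ℕ)
    · have hB : ∀ c d, gaudinPDeriv h₂ i c d X = G c d := fun c d =>
        pderiv_ge_eq h₂ hd₂ hsum i i₀ hik hi₀ c d X
      simp only [hB]
      have := site_identity (X i) (fun a b => gaudinPDeriv h₁ i a b X) G
      rw [this]
      refine Finset.sum_congr rfl fun a _ => Finset.sum_congr rfl fun b _ => ?_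
      congr 1
    · push_neg at hik
      have hA : ∀ a b, gaudinPDeriv h₁ i a b X = 0 := fun a b =>
        pderiv_lt_eq_zero h₁ hd₁ hdep₁ i hik a b X
      simp [hA]
  rw [main]
  have expandP := fderiv_expand h₁ X P
  have expandQ := fderiv_expand h₁ X Q
  have hPQ : fderiv ℂ h₁ X P = fderiv ℂ h₁ X Q := conj_deriv_eq h₁ hd₁ hinv₁ X Y
  have : ∑ i : Fin N, ∑ a : Fin r, ∑ b : Fin r,
      (Q i a b - P i a b) * gaudinPDeriv h₁ i a b X
      = fderiv ℂ h₁ X Q - fderiv ℂ h₁ X P := by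
    rw [expandP, expandQ]
    simp [sub_mul, Finset.sum_sub_distrib]
  rw [this, hPQ, sub_self]

lemma diff_coord {N r : ℕ} (i : Fin N) (a b : Fin r) :
    Differentiable ℂ fun X : GaudinPhase N r => X i a b := by
  have h1 : Differentiable ℂ (id : GaudinPhase N r → GaudinPhase N r) := differentiable_id
  exact differentiable_pi.mp (differentiable_pi.mp (differentiable_pi.mp h1 i) a) b

lemma diff_entry_pow {N r : ℕ} (A : GaudinPhase N r → Matrix (Fin r) (Fin r) ℂ)
    (hA : ∀ a b, Differentiable ℂ fun X => A X a b) (m : ℕ) :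
    ∀ a b, Differentiable ℂ fun X => (A X ^ m) a b := by
  induction m with
  | zero =>
    intro a b
    simp only [pow_zero]
    simpa [Matrix.one_apply] using (differentiable_const (if a = b then (1:ℂ) else 0))
  | succ n ih =>
    intro a b
    simp only [pow_succ, Matrix.mul_apply]
    exact Differentiable.fun_sum fun c _ => (ih a c).mul (hA c b)

lemma diff_trace_pow {N r : ℕ} (A : GaudinPhase N r → Matrix (Fin r) (Fin r) ℂ)
    (hA : ∀ a b, Differentiable ℂ fun X => A X a b) (m : ℕ) :
    Differentiable ℂ fun X => Matrix.trace (A X ^ m) := by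
  simp only [Matrix.trace, Matrix.diag]
  exact Differentiable.fun_sum fun a _ => diff_entry_pow A hA m a a

lemma diff_lax₁ {N r : ℕ} (k : ℕ) (u : Fin N → ℂ) (u₀ : ℂ) (a b : Fin r) :
    Differentiable ℂ fun X : GaudinPhase N r => glueLax₁ k u u₀ X a b := by
  have : (fun X : GaudinPhase N r => glueLax₁ k u u₀ X a b)
      = fun X => ∑ i ∈ Finset.univ.filter (fun i : Fin N => k ≤ (i : ℕ)),
          (u₀ - u i)⁻¹ * X i a b := by
    funext X; simp [glueLax₁, Matrix.sum_apply]
  rw [this]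
  exact Differentiable.fun_sum fun i _ => (diff_coord i a b).const_mul _

lemma diff_lax₂ {N r : ℕ} (k : ℕ) (z : Fin N → ℂ) (w v₀ : ℂ) (a b : Fin r) :
    Differentiable ℂ fun X : GaudinPhase N r => glueLax₂ k z w v₀ X a b := by
  have : (fun X : GaudinPhase N r => glueLax₂ k z w v₀ X a b)
      = fun X => (∑ i ∈ Finset.univ.filter (fun i : Fin N => (i : ℕ) < k),
          (v₀ - z i)⁻¹ * X i a b) +
          (v₀ - w)⁻¹ * ∑ i ∈ Finset.univ.filter (fun i : Fin N => k ≤ (i : ℕ)), X i a b := by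
    funext X
    simp [glueLax₂, Matrix.sum_apply, Finset.mul_sum]
  rw [this]
  exact (Differentiable.fun_sum fun i _ => (diff_coord i a b).const_mul _).add
    ((Differentiable.fun_sum fun i _ => diff_coord i a b).const_mul _)

lemma glConjPow {r : ℕ} (g : GL (Fin r) ℂ) (A : Matrix (Fin r) (Fin r) ℂ) (m : ℕ) :
    ((g : Matrix (Fin r) (Fin r) ℂ) * A * ((g⁻¹ : GL (Fin r) ℂ) : Matrix (Fin r) (Fin r) ℂ)) ^ m
      = (g : Matrix (Fin r) (Fin r) ℂ) * A ^ m *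
        ((g⁻¹ : GL (Fin r) ℂ) : Matrix (Fin r) (Fin r) ℂ) := by
  induction m with
  | zero => simp only [pow_zero, mul_one]; rw [g.mul_inv]
  | succ n ih =>
    rw [pow_succ, pow_succ, ih]
    have : ((g⁻¹ : GL (Fin r) ℂ) : Matrix (Fin r) (Fin r) ℂ) *
        ((g : Matrix (Fin r) (Fin r) ℂ) * A *
          ((g⁻¹ : GL (Fin r) ℂ) : Matrix (Fin r) (Fin r) ℂ))
        = A * ((g⁻¹ : GL (Fin r) ℂ) : Matrix (Fin r) (Fin r) ℂ) := by
      rw [← mul_assoc, ← mul_assoc, g.inv_mul, one_mul]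
    rw [mul_assoc ((g : Matrix (Fin r) (Fin r) ℂ) * A ^ n), this, ← mul_assoc, ← mul_assoc]

lemma lax₁_conj {N r : ℕ} (k : ℕ) (u : Fin N → ℂ) (u₀ : ℂ) (g : GL (Fin r) ℂ)
    (X : GaudinPhase N r) :
    glueLax₁ k u u₀ (fun i a b =>
        ((g : Matrix (Fin r) (Fin r) ℂ) * Matrix.of (X i) *
          ((g⁻¹ : GL (Fin r) ℂ) : Matrix (Fin r) (Fin r) ℂ)) a b)
      = (g : Matrix (Fin r) (Fin r) ℂ) * glueLax₁ k u u₀ X *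
        ((g⁻¹ : GL (Fin r) ℂ) : Matrix (Fin r) (Fin r) ℂ) := by
  unfold glueLax₁
  rw [Finset.mul_sum, Finset.sum_mul]
  refine Finset.sum_congr rfl fun i _ => ?_
  show (u₀ - u i)⁻¹ • ((g : Matrix (Fin r) (Fin r) ℂ) * Matrix.of (X i) *
      ((g⁻¹ : GL (Fin r) ℂ) : Matrix (Fin r) (Fin r) ℂ))
    = (g : Matrix (Fin r) (Fin r) ℂ) * ((u₀ - u i)⁻¹ • Matrix.of (X i)) *
      ((g⁻¹ : GL (Fin r) ℂ) : Matrix (Fin r) (Fin r) ℂ)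
  rw [mul_smul_comm, smul_mul_assoc]

end GluedGaudinAux

/-- Poisson commutativity of the glued Gaudin families.  On `gl(r)^N` with the product
Lie–Poisson bracket, any (differentiable) function `h₂` which depends on `X_1, …, X_k` only
through their sum and is built from the spectral invariants of `L₂`, Poisson-commutes with
any (differentiable) function `h₁` which depends only on `X_{k+1}, …, X_N` and is invariant
under the diagonal adjoint action of `GL(r)`.  In particular,
`{Tr (L₁(u₀)^m), Tr (L₂(v₀)^n)} = 0`. -/
theorem glued_gaudin_poisson_commute
    {N r : ℕ} (k : ℕ) (hk1 : 1 ≤ k) (hkN : k < N)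
    (z u : Fin N → ℂ) (w : ℂ)
    (hz : ∀ i j : Fin N, (i : ℕ) < k → (j : ℕ) < k → z i = z j → i = j)
    (hw : ∀ i : Fin N, (i : ℕ) < k → w ≠ z i)
    (hu : ∀ i j : Fin N, k ≤ (i : ℕ) → k ≤ (j : ℕ) → u i = u j → i = j)
    (h₁ h₂ : GaudinPhase N r → ℂ)
    (hd₁ : Differentiable ℂ h₁) (hd₂ : Differentiable ℂ h₂)
    -- `h₁` depends only on `X_{k+1}, …, X_N`:
    (hdep₁ : ∀ X Y : GaudinPhase N r, (∀ i : Fin N, k ≤ (i : ℕ) → X i = Y i) → h₁ X = h₁ Y)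
    -- `h₁` is invariant under the diagonal adjoint action of `GL(r)`:
    (hinv₁ : ∀ g : GL (Fin r) ℂ, ∀ X : GaudinPhase N r,
      h₁ (fun i a b =>
        ((g : Matrix (Fin r) (Fin r) ℂ) * Matrix.of (X i) *
          ((g⁻¹ : GL (Fin r) ℂ) : Matrix (Fin r) (Fin r) ℂ)) a b) = h₁ X)
    -- `h₂` depends on `X_1, …, X_k` only through their sum:
    (hsum₂ : ∀ X Y : GaudinPhase N r,
      (∑ i ∈ Finset.univ.filter (fun i : Fin N => (i : ℕ) < k), Matrix.of (X i)) =
        (∑ i ∈ Finset.univ.filter (fun i : Fin N => (i : ℕ) < k), Matrix.of (Y i)) →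
      (∀ i : Fin N, k ≤ (i : ℕ) → X i = Y i) → h₂ X = h₂ Y)
    -- `h₂` is built from the spectral invariants of `L₂`:
    (hspec₂ : ∃ Φ : (ℂ → ℕ → ℂ) → ℂ, ∀ X : GaudinPhase N r,
      h₂ X = Φ (fun v m => Matrix.trace (glueLax₂ k z w v X ^ m))) :
    (∀ X : GaudinPhase N r, gaudinPoisson h₁ h₂ X = 0) ∧
    (∀ u₀ v₀ : ℂ, (∀ i : Fin N, k ≤ (i : ℕ) → u₀ ≠ u i) →
      (∀ i : Fin N, (i : ℕ) < k → v₀ ≠ z i) → v₀ ≠ w →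
      ∀ (m n : ℕ) (X : GaudinPhase N r),
        gaudinPoisson (fun X => Matrix.trace (glueLax₁ k u u₀ X ^ m))
          (fun X => Matrix.trace (glueLax₂ k z w v₀ X ^ n)) X = 0) := by
  constructor
  · intro X
    obtain ⟨Φ, hΦ⟩ := hspec₂
    refine key_poisson k hkN h₁ h₂ hd₁ hd₂ hdep₁ hinv₁ ?_ X
    intro A B hlt hs
    rw [hΦ A, hΦ B]
    congr 1
    funext v m
    have hLax : glueLax₂ k z w v A = glueLax₂ k z w v B := by
      unfold glueLax₂
      congr 1
      · exact Finset.sum_congr rfl fun i hi => by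
          rw [hlt i (Finset.mem_filter.mp hi).2]
      · rw [hs]
    rw [hLax]
  · intro u₀ v₀ hu₀ hz₀ hw₀ m n X
    refine key_poisson k hkN _ _ ?_ ?_ ?_ ?_ ?_ X
    · exact diff_trace_pow _ (fun a b => diff_lax₁ k u u₀ a b) m
    · exact diff_trace_pow _ (fun a b => diff_lax₂ k z w v₀ a b) n
    · intro A B hAB
      have hLax : glueLax₁ k u u₀ A = glueLax₁ k u u₀ B := by
        unfold glueLax₁
        exact Finset.sum_congr rfl fun i hi => by
          rw [hAB i (Finset.mem_filter.mp hi).2]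
      rw [hLax]
    · intro g A
      rw [lax₁_conj, glConjPow, Matrix.trace_mul_cycle, g.inv_mul, one_mul]
    · intro A B hlt hs
      have hLax : glueLax₂ k z w v₀ A = glueLax₂ k z w v₀ B := by
        unfold glueLax₂
        congr 1
        · exact Finset.sum_congr rfl fun i hi => by
            rw [hlt i (Finset.mem_filter.mp hi).2]
        · rw [hs]
      rw [hLax]

end
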